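/- The commutator subgroup of G = A(n,θ) equals its center. -/

import Mathlib

noncomputable section

abbrev Fq (n : ℕ) : Type := GaloisField 2 n

instance (n : ℕ) : Fintype (Fq n) := Fintype.ofFinite _

@[ext] structure SuzukiA (n : ℕ) (θ : Fq n ≃+* Fq n) where
  a : Fq n
  b : Fq n

namespace SuzukiA

variable {n : ℕ} {θ : Fq n ≃+* Fq n}

instance : Mul (SuzukiA n θ) := ⟨fun x y => ⟨x.a + y.a, x.b + y.b + x.a * θ y.a⟩⟩
instance : One (SuzukiA n θ) := ⟨⟨0, 0⟩⟩
instance : Inv (SuzukiA n θ) := ⟨fun x => ⟨x.a, x.b + x.a * θ x.a⟩⟩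

theorem mul_def (x y : SuzukiA n θ) :
    x * y = ⟨x.a + y.a, x.b + y.b + x.a * θ y.a⟩ := rfl

@[simp] theorem one_a : (1 : SuzukiA n θ).a = 0 := rfl
@[simp] theorem one_b : (1 : SuzukiA n θ).b = 0 := rfl

instance : Group (SuzukiA n θ) where
  mul_assoc x y z := by ext <;> simp [mul_def, map_add] <;> ring
  one_mul x := by ext <;> simp [mul_def]
  mul_one x := by ext <;> simp [mul_def]
  inv_mul_cancel x := by
    have h2 : (2 : Fq n) = 0 := by
      have := CharP.cast_eq_zero (Fq n) 2
      exact_mod_cast this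
    show (⟨x.a, x.b + x.a * θ x.a⟩ * x : SuzukiA n θ) = 1
    ext
    · show x.a + x.a = 0
      linear_combination x.a * h2
    · show x.b + x.a * θ x.a + x.b + x.a * θ x.a = 0
      linear_combination (x.b + x.a * θ x.a) * h2

instance : Fintype (SuzukiA n θ) :=
  Fintype.ofEquiv (Fq n × Fq n)
    { toFun := fun p => ⟨p.1, p.2⟩
      invFun := fun x => (x.a, x.b)
      left_inv := fun _ => rfl
      right_inv := fun _ => rfl }

end SuzukiA


section Aux
variable {n : ℕ}

lemma Fq.two_eq_zero : (2 : Fq n) = 0 := by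
  have := CharP.cast_eq_zero (Fq n) 2; exact_mod_cast this

lemma ringEquiv_algebraMap (σ : Fq n ≃+* Fq n) (c : ZMod 2) :
    σ (algebraMap (ZMod 2) (Fq n) c) = algebraMap (ZMod 2) (Fq n) c := by
  have h : (σ : Fq n →+* Fq n).comp (algebraMap (ZMod 2) (Fq n)) = algebraMap (ZMod 2) (Fq n) :=
    RingHom.ext_zmod _ _
  exact RingHom.congr_fun h c

def toLin (σ : Fq n ≃+* Fq n) : Fq n →ₗ[ZMod 2] Fq n where
  toFun := σ
  map_add' x y := map_add σ x y
  map_smul' c x := by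
    show σ (c • x) = (RingHom.id (ZMod 2)) c • σ x
    rw [Algebra.smul_def, map_mul, ringEquiv_algebraMap, RingHom.id_apply, ← Algebra.smul_def]

lemma orderOf_theta (hn : 1 < n) (θ : Fq n ≃+* Fq n)
    (hθ : ∀ σ : Fq n ≃+* Fq n, σ ∈ Subgroup.zpowers θ) : orderOf θ = n := by
  have htop : Subgroup.zpowers θ = ⊤ := (Subgroup.eq_top_iff' _).2 hθ
  have e : (Fq n ≃ₐ[ZMod 2] Fq n) ≃ (Fq n ≃+* Fq n) :=
    { toFun := fun σ => σ.toRingEquiv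
      invFun := fun σ => AlgEquiv.ofRingEquiv (f := σ) (fun x => ringEquiv_algebraMap σ x)
      left_inv := fun σ => by ext x; rfl
      right_inv := fun σ => by ext x; rfl }
  have h1 : Nat.card (Fq n ≃+* Fq n) = n := by
    rw [← Nat.card_congr e, IsGalois.card_aut_eq_finrank,
      GaloisField.finrank (p := 2) (by omega : n ≠ 0)]
  rw [← Nat.card_zpowers, htop, Subgroup.card_top]
  exact h1

lemma fixed_eq (θ : Fq n ≃+* Fq n)
    (hθ : ∀ σ : Fq n ≃+* Fq n, σ ∈ Subgroup.zpowers θ) {x : Fq n} (hx : θ x = x) :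
    x = 0 ∨ x = 1 := by
  obtain ⟨k, hk⟩ := Subgroup.mem_zpowers_iff.mp (hθ (frobeniusEquiv (Fq n) 2))
  have hfix : ∀ j : ℤ, (θ ^ j) x = x := by
    intro j
    induction j using Int.induction_on with
    | zero => rfl
    | succ i ih =>
      rw [zpow_add_one]
      show (θ ^ (i : ℤ)) (θ x) = x
      rw [hx]; exact ih
    | pred i ih =>
      rw [zpow_sub_one]
      have hx' : θ.symm x = x := by conv_lhs => rw [← hx, RingEquiv.symm_apply_apply]
      show (θ ^ (-i : ℤ)) (θ.symm x) = x
      rw [hx']; exact ih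
  have hx2 : x ^ 2 = x := by
    have := hfix k
    rw [hk] at this
    simpa [frobeniusEquiv_def, frobenius_def] using this
  have : x * (x - 1) = 0 := by ring_nf; linear_combination hx2
  rcases mul_eq_zero.mp this with h | h
  · exact Or.inl h
  · exact Or.inr (sub_eq_zero.mp h)

end Aux
section Aux2
variable {n : ℕ}

lemma key (hn : 1 < n) (hodd : Odd n) (θ : Fq n ≃+* Fq n)
    (hθ : ∀ σ : Fq n ≃+* Fq n, σ ∈ Subgroup.zpowers θ)
    (B : Submodule (ZMod 2) (Fq n))
    (hB : ∀ a c : Fq n, a * θ c + c * θ a ∈ B) : B = ⊤ := by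
  have h2 : (2 : Fq n) = 0 := Fq.two_eq_zero
  have hord : orderOf θ = n := orderOf_theta hn θ hθ
  have hpow : θ ^ n = 1 := by
    have := pow_orderOf_eq_one θ
    rwa [hord] at this
  set N : Fq n →ₗ[ZMod 2] Fq n := ∑ i ∈ Finset.range n, toLin (θ ^ i) with hN
  have hNapp : ∀ x, N x = ∑ i ∈ Finset.range n, (θ ^ i) x := by
    intro x
    rw [hN, LinearMap.sum_apply]
    rfl
  have hNθ : ∀ x, N (θ x) = N x := by
    intro x
    rw [hNapp, hNapp]
    have hstep : ∀ i, (θ ^ i) (θ x) = (θ ^ (i + 1)) x := by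
      intro i; rw [pow_succ]; rfl
    rw [Finset.sum_congr rfl fun i _ => hstep i]
    have hf0 : (θ ^ n) x = (θ ^ 0) x := by rw [hpow]; rfl
    have e1 := Finset.sum_range_succ (fun i => (θ ^ i) x) n
    have e2 := Finset.sum_range_succ' (fun i => (θ ^ i) x) n
    rw [e1] at e2
    have := e2.symm
    rw [hf0] at this
    exact add_right_cancel this
  have hfixN : ∀ x, θ (N x) = N x := by
    intro x
    have : θ (N x) = N (θ x) := by
      rw [hNapp, hNapp, map_sum]
      refine Finset.sum_congr rfl fun i _ => ?_
      show (θ * θ ^ i) x = (θ ^ i * θ) x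
      rw [pow_mul_comm']
    rw [this, hNθ]
  have hN01 : ∀ x, N x = 0 ∨ N x = 1 := fun x => fixed_eq θ hθ (hfixN x)
  have hN1 : N 1 = 1 := by
    rw [hNapp]
    have : ∀ i ∈ Finset.range n, (θ ^ i) (1 : Fq n) = 1 := fun i _ => map_one (θ ^ i)
    rw [Finset.sum_congr rfl this, Finset.sum_const, Finset.card_range, nsmul_eq_mul, mul_one]
    obtain ⟨m, hm⟩ := hodd
    have hcast : ((2 * m + 1 : ℕ) : Fq n) = 1 := by
      push_cast
      linear_combination (m : Fq n) * h2
    rw [← hm] at hcast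
    exact hcast
  set oneAdd : Fq n →ₗ[ZMod 2] Fq n := toLin (1 : Fq n ≃+* Fq n) + toLin θ with hOA
  have hOAapp : ∀ x, oneAdd x = x + θ x := fun x => rfl
  have hker : LinearMap.ker oneAdd = Submodule.span (ZMod 2) {(1 : Fq n)} := by
    apply le_antisymm
    · intro x hx
      have hx' : x + θ x = 0 := hx
      have hfx : θ x = x := by linear_combination hx' - x * h2
      rcases fixed_eq θ hθ hfx with h | h
      · rw [h]; exact Submodule.zero_mem _
      · rw [h]; exact Submodule.mem_span_singleton_self 1
    · rw [Submodule.span_le, Set.singleton_subset_iff]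
      show oneAdd 1 = 0
      rw [hOAapp, map_one]
      linear_combination h2
  have hfr : Module.finrank (ZMod 2) (Fq n) = n := GaloisField.finrank (p := 2) (by omega)
  have hkerrank : Module.finrank (ZMod 2) (LinearMap.ker oneAdd) = 1 := by
    rw [hker]; exact finrank_span_singleton one_ne_zero
  have hrk := LinearMap.finrank_range_add_finrank_ker oneAdd
  rw [hkerrank, hfr] at hrk
  have hrangeN : LinearMap.range oneAdd ≤ LinearMap.ker N := by
    rintro _ ⟨x, rfl⟩
    rw [LinearMap.mem_ker, hOAapp, map_add, hNθ]
    linear_combination N x * h2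
  have hNne : LinearMap.ker N ≠ ⊤ := by
    intro h
    have h1 : (1 : Fq n) ∈ LinearMap.ker N := h.symm ▸ Submodule.mem_top
    rw [LinearMap.mem_ker, hN1] at h1
    exact one_ne_zero h1
  have hlt : Module.finrank (ZMod 2) (LinearMap.ker N) < n := by
    have h := Submodule.finrank_lt hNne
    rwa [hfr] at h
  have heq : LinearMap.range oneAdd = LinearMap.ker N :=
    Submodule.eq_of_le_of_finrank_le hrangeN (by omega)
  have hrangeB : LinearMap.range oneAdd ≤ B := by
    rintro _ ⟨x, rfl⟩
    rw [hOAapp]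
    have := hB x 1
    rw [map_one, mul_one, one_mul] at this
    exact this
  have hkerB : ∀ w, N w = 0 → w ∈ B := by
    intro w hw
    exact hrangeB (heq ▸ LinearMap.mem_ker.mpr hw)
  -- element with N = 1
  have h2ne : ∃ c, θ (θ c) ≠ c := by
    by_contra h
    push_neg at h
    have hsq : θ ^ 2 = 1 := by
      ext c
      show (θ * θ) (c) = c
      exact h c
    have := orderOf_dvd_of_pow_eq_one hsq
    rw [hord] at this
    have hle := Nat.le_of_dvd two_pos this
    obtain ⟨m, hm⟩ := hodd
    omega
  obtain ⟨c, hc⟩ := h2ne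
  set u := θ c + θ.symm c with hu'
  have hu : u ≠ 0 := by
    intro h
    apply hc
    have h' : θ c = θ.symm c := by linear_combination h - θ.symm c * h2
    rw [h', RingEquiv.apply_symm_apply]
  set a := u⁻¹ with ha
  set x₀ := a * θ c + c * θ a with hx₀'
  have hx₀B : x₀ ∈ B := hB a c
  have hNx₀ : N x₀ = 1 := by
    have h1 : c * θ a = θ (θ.symm c * a) := by rw [map_mul, RingEquiv.apply_symm_apply]
    calc N x₀ = N (a * θ c) + N (c * θ a) := by rw [hx₀', map_add]
      _ = N (a * θ c) + N (θ.symm c * a) := by rw [h1, hNθ]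
      _ = N (a * θ c + θ.symm c * a) := (map_add N _ _).symm
      _ = N (a * u) := by rw [hu']; ring_nf
      _ = N 1 := by rw [ha, inv_mul_cancel₀ hu]
      _ = 1 := hN1
  rw [eq_top_iff]
  intro y _
  rcases hN01 y with hy | hy
  · exact hkerB y hy
  · have hsum : N (y + x₀) = 0 := by
      rw [map_add, hy, hNx₀]; linear_combination h2
    have h1 : y + x₀ ∈ B := hkerB _ hsum
    have h3 : y = (y + x₀) + x₀ := by linear_combination -x₀ * h2
    rw [h3]
    exact B.add_mem h1 hx₀B
end Aux2
open scoped commutatorElement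
namespace SuzukiA
variable {n : ℕ} {θ : Fq n ≃+* Fq n}

theorem inv_def (x : SuzukiA n θ) : x⁻¹ = ⟨x.a, x.b + x.a * θ x.a⟩ := rfl

theorem comm_elt (x y : SuzukiA n θ) :
    ⁅x, y⁆ = ⟨0, x.a * θ y.a + y.a * θ x.a⟩ := by
  have h2 : (2 : Fq n) = 0 := Fq.two_eq_zero
  show x * y * x⁻¹ * y⁻¹ = _
  ext
  · show x.a + y.a + x.a + y.a = 0
    linear_combination (x.a + y.a) * h2
  · show x.b + y.b + x.a * θ y.a + (x.b + x.a * θ x.a) + (x.a + y.a) * θ x.a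
        + (y.b + y.a * θ y.a) + (x.a + y.a + x.a) * θ y.a
        = x.a * θ y.a + y.a * θ x.a
    linear_combination (x.b + y.b + x.a * θ x.a + y.a * θ y.a + x.a * θ y.a) * h2

end SuzukiA

open SuzukiA in
theorem stmt5 (n : ℕ) (hn : 1 < n) (hodd : Odd n) (θ : Fq n ≃+* Fq n)
    (hθ : ∀ σ : Fq n ≃+* Fq n, σ ∈ Subgroup.zpowers θ) :
    commutator (SuzukiA n θ) = Subgroup.center (SuzukiA n θ) := by
  have h2 : (2 : Fq n) = 0 := Fq.two_eq_zero
  have hord := orderOf_theta hn θ hθ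
  have hcen : ∀ z : SuzukiA n θ, z.a = 0 → z ∈ Subgroup.center (SuzukiA n θ) := by
    intro z hz
    rw [Subgroup.mem_center_iff]
    intro g
    ext
    · show g.a + z.a = z.a + g.a
      ring
    · show g.b + z.b + g.a * θ z.a = z.b + g.b + z.a * θ g.a
      rw [hz, map_zero]
      ring
  apply le_antisymm
  · rw [commutator_def, Subgroup.commutator_le]
    intro g₁ _ g₂ _
    exact hcen _ (by rw [comm_elt])
  · intro z hz
    rw [Subgroup.mem_center_iff] at hz
    have hz1 : ∀ c : Fq n, c * θ z.a = z.a * θ c := by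
      intro c
      have h := congrArg SuzukiA.b (hz ⟨c, 0⟩)
      simp only [mul_def] at h
      linear_combination h
    have hza : z.a = 0 := by
      by_contra hza
      have h1 : θ z.a = z.a := by
        have h := hz1 1
        rw [one_mul, map_one, mul_one] at h
        exact h
      have hall : ∀ c, θ c = (1 : Fq n ≃+* Fq n) c := by
        intro c
        have h := hz1 c
        rw [h1] at h
        have h3 : z.a * θ c = z.a * c := by linear_combination -h
        exact mul_left_cancel₀ hza h3
      rw [RingEquiv.ext hall, orderOf_one] at hord
      omega
    set B : Submodule (ZMod 2) (Fq n) :=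
      { carrier := {b | (⟨0, b⟩ : SuzukiA n θ) ∈ commutator (SuzukiA n θ)}
        add_mem' := by
          intro b b' hb hb'
          have heq : (⟨0, b + b'⟩ : SuzukiA n θ) = ⟨0, b⟩ * ⟨0, b'⟩ := by
            ext
            · show (0 : Fq n) = 0 + 0
              ring
            · show b + b' = b + b' + 0 * θ 0
              ring
          show (⟨0, b + b'⟩ : SuzukiA n θ) ∈ commutator (SuzukiA n θ)
          rw [heq]
          exact mul_mem hb hb'
        zero_mem' := by
          show (⟨0, (0 : Fq n)⟩ : SuzukiA n θ) ∈ commutator (SuzukiA n θ)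
          exact Subgroup.one_mem _
        smul_mem' := by
          intro c b hb
          have hc : ∀ c : ZMod 2, c = 0 ∨ c = 1 := by decide
          rcases hc c with rfl | rfl
          · rw [zero_smul]
            show (⟨0, (0 : Fq n)⟩ : SuzukiA n θ) ∈ commutator (SuzukiA n θ)
            exact Subgroup.one_mem _
          · rw [one_smul]
            exact hb } with hBdef
    have hBtop : B = ⊤ := by
      apply key hn hodd θ hθ
      intro a c
      have hmem : ⁅(⟨a, 0⟩ : SuzukiA n θ), (⟨c, 0⟩ : SuzukiA n θ)⁆ ∈ commutator (SuzukiA n θ) :=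
        Subgroup.commutator_mem_commutator (Subgroup.mem_top _) (Subgroup.mem_top _)
      rw [comm_elt] at hmem
      exact hmem
    have hzb : z.b ∈ B := by rw [hBtop]; exact Submodule.mem_top
    have hze : z = ⟨0, z.b⟩ := by
      ext
      · exact hza
      · rfl
    rw [hze]
    exact hzb
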